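/- The geodesic (arc-length) distance d_R(q₁,q₂) = arccos(∬ q₁ q₂ dx dy) between unit-norm half-densities is invariant under simultaneous warping: d_R((q₁*γ),(q₂*γ)) = d_R(q₁,q₂). -/
import Mathlib

open MeasureTheory Set

/-- γ is a boundary-preserving C¹ diffeomorphism of [0,1] with derivative γ' positive. -/
def IsDiffeo01 (γ γ' : ℝ → ℝ) : Prop :=
  γ 0 = 0 ∧ γ 1 = 1 ∧ Set.BijOn γ (Set.Icc 0 1) (Set.Icc 0 1) ∧
  (∀ x ∈ Set.Icc (0:ℝ) 1, HasDerivAt γ (γ' x) x) ∧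
  ContinuousOn γ' (Set.Icc 0 1) ∧
  (∀ x ∈ Set.Icc (0:ℝ) 1, 0 < γ' x)

/-- The warping action on half-densities. -/
noncomputable def warpQ (q : ℝ → ℝ → ℝ) (γ γ' : ℝ → ℝ) (x y : ℝ) : ℝ :=
  q (γ x) (γ y) * Real.sqrt (γ' x) * Real.sqrt (γ' y)


/-- The geodesic (arc-length) distance between half-densities. -/
noncomputable def dR (q₁ q₂ : ℝ → ℝ → ℝ) : ℝ :=
  Real.arccos (∫ x in Set.Icc (0:ℝ) 1, ∫ y in Set.Icc (0:ℝ) 1, q₁ x y * q₂ x y)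

/-- Substitution lemma: for any function g, ∫ over Icc of γ'·(g∘γ) equals ∫ g. -/
lemma subst_lemma (γ γ' : ℝ → ℝ) (hγ : IsDiffeo01 γ γ') (g : ℝ → ℝ) :
    ∫ x in Set.Icc (0:ℝ) 1, γ' x * g (γ x) = ∫ u in Set.Icc (0:ℝ) 1, g u := by
  obtain ⟨-, -, hbij, hderiv, -, hpos⟩ := hγ
  have hs : MeasurableSet (Set.Icc (0:ℝ) 1) := measurableSet_Icc
  have h := integral_image_eq_integral_abs_deriv_smul hs
      (fun x hx => (hderiv x hx).hasDerivWithinAt) hbij.injOn g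
  rw [hbij.image_eq] at h
  rw [h]
  refine setIntegral_congr_fun hs fun x hx => ?_
  simp [abs_of_pos (hpos x hx), smul_eq_mul]

theorem dR_warping_invariant
    (q₁ q₂ : ℝ → ℝ → ℝ) (γ γ' : ℝ → ℝ) (hγ : IsDiffeo01 γ γ')
    (h₁ : IntegrableOn (fun p : ℝ × ℝ => (q₁ p.1 p.2) ^ 2) (Set.Icc 0 1 ×ˢ Set.Icc 0 1))
    (h₂ : IntegrableOn (fun p : ℝ × ℝ => (q₂ p.1 p.2) ^ 2) (Set.Icc 0 1 ×ˢ Set.Icc 0 1))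
    (hm₁ : Measurable (fun p : ℝ × ℝ => q₁ p.1 p.2))
    (hm₂ : Measurable (fun p : ℝ × ℝ => q₂ p.1 p.2))
    (hn₁ : ∀ x y : ℝ, 0 ≤ q₁ x y) (hn₂ : ∀ x y : ℝ, 0 ≤ q₂ x y)
    (hu₁ : ∫ x in Set.Icc (0:ℝ) 1, ∫ y in Set.Icc (0:ℝ) 1, (q₁ x y) ^ 2 = 1)
    (hu₂ : ∫ x in Set.Icc (0:ℝ) 1, ∫ y in Set.Icc (0:ℝ) 1, (q₂ x y) ^ 2 = 1) :
    dR (warpQ q₁ γ γ') (warpQ q₂ γ γ') = dR q₁ q₂ := by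
  obtain ⟨-, -, -, -, -, hpos⟩ := id hγ
  have hs : MeasurableSet (Set.Icc (0:ℝ) 1) := measurableSet_Icc
  unfold dR
  congr 1
  have key : ∀ x, x ∈ Set.Icc (0:ℝ) 1 →
      (∫ y in Set.Icc (0:ℝ) 1, warpQ q₁ γ γ' x y * warpQ q₂ γ γ' x y)
        = γ' x * ∫ v in Set.Icc (0:ℝ) 1, q₁ (γ x) v * q₂ (γ x) v := by
    intro x hx
    have hinner : (∫ y in Set.Icc (0:ℝ) 1, warpQ q₁ γ γ' x y * warpQ q₂ γ γ' x y)
        = ∫ y in Set.Icc (0:ℝ) 1, γ' x * (γ' y * (q₁ (γ x) (γ y) * q₂ (γ x) (γ y))) := by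
      refine setIntegral_congr_fun hs fun y hy => ?_
      have hx' := (hpos x hx).le
      have hy' := (hpos y hy).le
      simp only [warpQ]
      rw [show q₁ (γ x) (γ y) * Real.sqrt (γ' x) * Real.sqrt (γ' y) *
            (q₂ (γ x) (γ y) * Real.sqrt (γ' x) * Real.sqrt (γ' y))
          = (Real.sqrt (γ' x) * Real.sqrt (γ' x)) * ((Real.sqrt (γ' y) * Real.sqrt (γ' y)) *
            (q₁ (γ x) (γ y) * q₂ (γ x) (γ y))) by ring]
      rw [Real.mul_self_sqrt hx', Real.mul_self_sqrt hy']
    rw [hinner, integral_const_mul, subst_lemma γ γ' hγ (fun v => q₁ (γ x) v * q₂ (γ x) v)]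
  rw [setIntegral_congr_fun hs key,
    subst_lemma γ γ' hγ (fun u => ∫ v in Set.Icc (0:ℝ) 1, q₁ u v * q₂ u v)]
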